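/- arXiv:2206.11594 — 2 statements merged into one kernel-verified Lean document; each statement's English description precedes it below -/
import Mathlib

section
/- Let L be an even lattice, M ⊆ L a primitive sublattice on which the bilinear form is non-degenerate, and N = M^⊥ its orthogonal complement in L. Then the length of the discriminant group of N satisfies ℓ(N^♯) ≤ ℓ(M^♯) + ℓ(L^♯). -/
open Matrix

/- A lattice of rank `m` is modelled, via a choice of basis, as `ℤ^m = Fin m → ℤ`
equipped with the non-degenerate symmetric bilinear form given by a Gram matrix `S`. -/

variable {m : ℕ}

/-- The bilinear form associated with the Gram matrix `S`. -/
def BM (S : Matrix (Fin m) (Fin m) ℤ) (v w : Fin m → ℤ) : ℤ := v ⬝ᵥ (S *ᵥ w)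

/-- The invariant sublattice `L^g = {v ∈ L : g v = v}` of an automorphism `g`. -/
def invM (g : (Fin m → ℤ) ≃ₗ[ℤ] (Fin m → ℤ)) : Submodule ℤ (Fin m → ℤ) where
  carrier := {v | g v = v}
  add_mem' := by intro a b ha hb; simp only [Set.mem_setOf_eq, map_add] at *; rw [ha, hb]
  zero_mem' := by simp
  smul_mem' := by intro c a ha; simp only [Set.mem_setOf_eq, _root_.map_smul] at *; rw [ha]

/-- The orthogonal complement `M^⊥ = {v ∈ L : v·w = 0 for all w ∈ M}` of a sublattice. -/
def orthoM (S : Matrix (Fin m) (Fin m) ℤ) (M : Submodule ℤ (Fin m → ℤ)) :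
    Submodule ℤ (Fin m → ℤ) where
  carrier := {v | ∀ w ∈ M, BM S v w = 0}
  add_mem' := by
    intro a b ha hb w hw
    simp only [BM, add_dotProduct] at *
    rw [ha w hw, hb w hw, add_zero]
  zero_mem' := by intro w hw; simp [BM]
  smul_mem' := by
    intro c a ha w hw
    simp only [BM, smul_dotProduct] at *
    rw [ha w hw, smul_zero]

/-- The coinvariant sublattice `L_g = (L^g)^⊥`. -/
def coinvM (S : Matrix (Fin m) (Fin m) ℤ) (g : (Fin m → ℤ) ≃ₗ[ℤ] (Fin m → ℤ)) :
    Submodule ℤ (Fin m → ℤ) :=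
  orthoM S (invM g)

/-- `g` is an isometry with respect to the Gram matrix `S`. -/
def IsIsomM (S : Matrix (Fin m) (Fin m) ℤ) (g : (Fin m → ℤ) ≃ₗ[ℤ] (Fin m → ℤ)) : Prop :=
  ∀ v w, BM S (g v) (g w) = BM S v w

/-- The bilinear form of the Gram matrix `S` as a bundled bilinear map. -/
def bilinMap (S : Matrix (Fin m) (Fin m) ℤ) :
    (Fin m → ℤ) →ₗ[ℤ] (Fin m → ℤ) →ₗ[ℤ] ℤ :=
  LinearMap.mk₂ ℤ (BM S)
    (fun a b w => by rw [BM, BM, BM, add_dotProduct])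
    (fun c a w => by rw [BM, BM, smul_dotProduct])
    (fun a w w' => by rw [BM, BM, BM, mulVec_add, dotProduct_add])
    (fun c a w => by rw [BM, BM, mulVec_smul, dotProduct_smul])

/-- The discriminant group `M^♯ = M^∨/M` of a sublattice `M` (with the restricted form),
realized as the cokernel of the map `M → Hom(M,ℤ)`, `x ↦ (y ↦ x·y)`; for a non-degenerate
form this cokernel is canonically isomorphic to `M^∨/M`. -/
abbrev discGroup (S : Matrix (Fin m) (Fin m) ℤ) (M : Submodule ℤ (Fin m → ℤ)) :=
  (↥M →ₗ[ℤ] ℤ) ⧸ LinearMap.range ((bilinMap S).domRestrict₁₂ M M)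

/-- The length of an abelian group: the minimal number of generators. -/
noncomputable def glength (A : Type*) [AddCommGroup A] [Module ℤ A] : ℕ :=
  sInf {n | ∃ s : Finset A, s.card = n ∧ Submodule.span ℤ (s : Set A) = ⊤}

/-! ### Generic lemmas about `glength` -/

section glength

lemma glength_set_nonempty (A : Type*) [AddCommGroup A] [Module ℤ A] [Module.Finite ℤ A] :
    {n | ∃ s : Finset A, s.card = n ∧ Submodule.span ℤ (s : Set A) = ⊤}.Nonempty := by
  obtain ⟨s, hs⟩ := Module.Finite.fg_top (R := ℤ) (M := A)
  exact ⟨s.card, s, rfl, hs⟩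

lemma glength_spec (A : Type*) [AddCommGroup A] [Module ℤ A] [Module.Finite ℤ A] :
    ∃ s : Finset A, s.card = glength A ∧ Submodule.span ℤ (s : Set A) = ⊤ :=
  Nat.sInf_mem (glength_set_nonempty A)

lemma glength_le {A : Type*} [AddCommGroup A] [Module ℤ A] {s : Finset A}
    (hs : Submodule.span ℤ (s : Set A) = ⊤) : glength A ≤ s.card :=
  Nat.sInf_le ⟨s, rfl, hs⟩

lemma glength_le_of_surjective {A B : Type*} [AddCommGroup A] [Module ℤ A]
    [AddCommGroup B] [Module ℤ B] [Module.Finite ℤ A] (f : A →ₗ[ℤ] B)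
    (hf : Function.Surjective f) : glength B ≤ glength A := by
  classical
  obtain ⟨s, hcard, hspan⟩ := glength_spec A
  have hspan' : Submodule.span ℤ ((s.image f : Finset B) : Set B) = ⊤ := by
    rw [Finset.coe_image, ← Submodule.map_span, hspan, Submodule.map_top,
      LinearMap.range_eq_top.mpr hf]
  calc glength B ≤ (s.image f).card := glength_le hspan'
    _ ≤ s.card := Finset.card_image_le
    _ = glength A := hcard

lemma glength_le_add' {A B C : Type*} [AddCommGroup A] [Module ℤ A]
    [AddCommGroup B] [Module ℤ B] [AddCommGroup C] [Module ℤ C]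
    [Module.Finite ℤ B] [Module.Finite ℤ C]
    (f : A →ₗ[ℤ] B) (hf : Function.Surjective f) (g : C →ₗ[ℤ] A)
    (hrange : LinearMap.range g = LinearMap.ker f) :
    glength A ≤ glength C + glength B := by
  classical
  obtain ⟨s, hscard, hsspan⟩ := glength_spec C
  obtain ⟨t, htcard, htspan⟩ := glength_spec B
  choose lift hlift using hf
  set u : Finset A := s.image g ∪ t.image lift with hu
  set W := Submodule.span ℤ (u : Set A) with hW
  have hgW : LinearMap.range g ≤ W := by
    rw [LinearMap.range_eq_map, ← hsspan, Submodule.map_span]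
    apply Submodule.span_mono
    intro x hx
    obtain ⟨y, hy, rfl⟩ := hx
    exact Finset.mem_coe.mpr (Finset.mem_union_left _ (Finset.mem_image_of_mem g hy))
  have hmap : Submodule.map f W = ⊤ := by
    rw [eq_top_iff, ← htspan, Submodule.span_le]
    intro y hy
    exact ⟨lift y, Submodule.subset_span (Finset.mem_coe.mpr
      (Finset.mem_union_right _ (Finset.mem_image_of_mem lift (Finset.mem_coe.mp hy)))), hlift y⟩
  have hWtop : W = ⊤ := by
    have h1 := Submodule.comap_map_eq f W
    rw [hmap, Submodule.comap_top, ← hrange] at h1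
    rw [eq_top_iff, h1]
    exact sup_le le_rfl hgW
  calc glength A ≤ u.card := glength_le (hW ▸ hWtop)
    _ ≤ s.card + t.card := (Finset.card_union_le _ _).trans
        (Nat.add_le_add Finset.card_image_le Finset.card_image_le)
    _ = glength C + glength B := by rw [hscard, htcard]

lemma glength_le_of_injective {A B : Type*} [AddCommGroup A] [Module ℤ A]
    [AddCommGroup B] [Module ℤ B] [Module.Finite ℤ A]
    (f : B →ₗ[ℤ] A) (hf : Function.Injective f) : glength B ≤ glength A := by
  classical
  obtain ⟨s, hscard, hsspan⟩ := glength_spec A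
  set n := s.card with hn
  set e : Fin n ≃ {x // x ∈ s} := s.equivFin.symm with he
  set g : (Fin n → ℤ) →ₗ[ℤ] A := (Pi.basisFun ℤ (Fin n)).constr ℕ (fun i => ((e i : A))) with hgdef
  have hr : Set.range (fun i : Fin n => ((e i : A))) = (s : Set A) := by
    ext x
    constructor
    · rintro ⟨i, rfl⟩; exact (e i).2
    · intro hx; exact ⟨e.symm ⟨x, hx⟩, by simp⟩
  have hg : Function.Surjective g := by
    rw [← LinearMap.range_eq_top, hgdef, Module.Basis.constr_range, hr, hsspan]
  set Q := (LinearMap.range f).comap g with hQ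
  obtain ⟨k, b⟩ := Submodule.basisOfPid (Pi.basisFun ℤ (Fin n)) Q
  have hkn : k ≤ n := by
    have h1 : Module.finrank ℤ Q = k := Module.finrank_eq_card_basis b |>.trans (by simp)
    have h2 : Module.finrank ℤ Q ≤ Module.finrank ℤ (Fin n → ℤ) := Q.finrank_le
    simpa [h1, Module.finrank_pi] using h2
  have hbmem : ∀ i : Fin k, g (b i : Fin n → ℤ) ∈ LinearMap.range f := fun i =>
    Submodule.mem_comap.mp (b i).2
  choose c hc using fun i => hbmem i
  have hspan : Submodule.span ℤ (Set.range c) = ⊤ := by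
    rw [eq_top_iff]
    rintro x -
    have hfx : f x ∈ Submodule.map g Q := by
      rw [hQ, Submodule.map_comap_eq_of_surjective hg]
      exact ⟨x, rfl⟩
    obtain ⟨y, hyQ, hyx⟩ := hfx
    have hy : (⟨y, hyQ⟩ : ↥Q) = ∑ i, b.repr ⟨y, hyQ⟩ i • b i := (b.sum_repr ⟨y, hyQ⟩).symm
    have hyy : y = ∑ i, b.repr ⟨y, hyQ⟩ i • (b i : Fin n → ℤ) := by
      have := congrArg (Subtype.val) hy
      rw [Submodule.coe_sum] at this
      simpa only [Submodule.coe_smul] using this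
    have : f x = f (∑ i, b.repr ⟨y, hyQ⟩ i • c i) := by
      calc f x = g y := hyx.symm
        _ = g (∑ i, b.repr ⟨y, hyQ⟩ i • (b i : Fin n → ℤ)) := congrArg g hyy
        _ = f (∑ i, b.repr ⟨y, hyQ⟩ i • c i) := by
            simp only [map_sum, _root_.map_smul, map_zsmul, hc]
    have hx : x = ∑ i, b.repr ⟨y, hyQ⟩ i • c i := hf this
    rw [hx]
    refine Submodule.sum_mem _ fun i _ => ?_
    rw [← Int.cast_smul_eq_zsmul ℤ]
    exact Submodule.smul_mem _ _ (Submodule.subset_span (Set.mem_range_self i))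
  have hspan' : Submodule.span ℤ ((Finset.image c Finset.univ : Finset B) : Set B) = ⊤ := by
    rwa [Finset.coe_image, Finset.coe_univ, Set.image_univ]
  calc glength B ≤ (Finset.image c Finset.univ).card := glength_le hspan'
    _ ≤ k := Finset.card_image_le.trans (by simp)
    _ ≤ n := hkn
    _ = glength A := hscard

end glength

/-! ### Extension of functionals from a saturated submodule -/

lemma extend_functional (N : Submodule ℤ (Fin m → ℤ))
    (hsat : ∀ (c : ℤ) (x : Fin m → ℤ), c ≠ 0 → c • x ∈ N → x ∈ N)
    (g : ↥N →ₗ[ℤ] ℤ) : ∃ G : (Fin m → ℤ) →ₗ[ℤ] ℤ, ∀ n : ↥N, G (n : Fin m → ℤ) = g n := by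
  have htf : NoZeroSMulDivisors ℤ ((Fin m → ℤ) ⧸ N) := by
    constructor
    intro c x hcx
    by_contra h
    push_neg at h
    obtain ⟨hc, hx⟩ := h
    obtain ⟨y, rfl⟩ := N.mkQ_surjective x
    apply hx
    rw [Submodule.mkQ_apply, Submodule.Quotient.mk_eq_zero]
    apply hsat c y hc
    rw [← Submodule.Quotient.mk_eq_zero, ← Submodule.mkQ_apply, _root_.map_smul]
    exact hcx
  have : Module.Free ℤ ((Fin m → ℤ) ⧸ N) := Module.free_of_finite_type_torsion_free'
  have : Module.Projective ℤ ((Fin m → ℤ) ⧸ N) := Module.Projective.of_free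
  obtain ⟨σ, hσ⟩ := Module.projective_lifting_property N.mkQ LinearMap.id N.mkQ_surjective
  set π : (Fin m → ℤ) →ₗ[ℤ] (Fin m → ℤ) := LinearMap.id - σ.comp N.mkQ with hπ
  have hmem : ∀ x, π x ∈ N := by
    intro x
    rw [← Submodule.Quotient.mk_eq_zero, ← Submodule.mkQ_apply, hπ]
    simp only [LinearMap.sub_apply, LinearMap.id_apply, LinearMap.comp_apply, map_sub]
    have h2 : N.mkQ (σ (N.mkQ x)) = N.mkQ x := by
      have := LinearMap.congr_fun hσ (N.mkQ x)
      simpa using this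
    rw [h2, sub_self]
  set π' : (Fin m → ℤ) →ₗ[ℤ] ↥N := π.codRestrict N hmem with hπ'
  refine ⟨g.comp π', fun n => ?_⟩
  have : π' (n : Fin m → ℤ) = n := by
    apply Subtype.ext
    simp only [hπ', LinearMap.codRestrict_apply, hπ, LinearMap.sub_apply, LinearMap.id_apply,
      LinearMap.comp_apply]
    have hn : N.mkQ (n : Fin m → ℤ) = 0 := by
      rw [Submodule.mkQ_apply, Submodule.Quotient.mk_eq_zero]; exact n.2
    rw [hn, map_zero, sub_zero]
  rw [LinearMap.comp_apply, this]

/-! ### Rational orthogonality arguments -/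

section cast

def iot {m : ℕ} : (Fin m → ℤ) →ₗ[ℤ] (Fin m → ℚ) where
  toFun x := fun i => (x i : ℚ)
  map_add' x y := by funext i; push_cast; simp
  map_smul' c x := by funext i; push_cast; simp

lemma iot_apply (x : Fin m → ℤ) (i : Fin m) : iot x i = (x i : ℚ) := rfl

lemma iot_inj : Function.Injective (iot (m := m)) := by
  intro x y h
  funext i
  have := congrFun h i
  rw [iot_apply, iot_apply] at this
  exact_mod_cast this

lemma cast_BM (S : Matrix (Fin m) (Fin m) ℤ) (x y : Fin m → ℤ) :
    ((BM S x y : ℤ) : ℚ) = Matrix.toBilin' (S.map (Int.castRingHom ℚ)) (iot x) (iot y) := by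
  rw [Matrix.toBilin'_apply', BM]
  show (Int.castRingHom ℚ) (x ⬝ᵥ S *ᵥ y) = _
  rw [RingHom.map_dotProduct (Int.castRingHom ℚ)]
  have h2 : (⇑(Int.castRingHom ℚ)) ∘ (S *ᵥ y) = S.map (⇑(Int.castRingHom ℚ)) *ᵥ ((⇑(Int.castRingHom ℚ)) ∘ y) :=
    funext fun i => RingHom.map_mulVec (Int.castRingHom ℚ) S y i
  rw [h2]
  rfl

lemma BM_symm {S : Matrix (Fin m) (Fin m) ℤ} (hsymm : S.IsSymm) (x y : Fin m → ℤ) :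
    BM S x y = BM S y x := by
  rw [BM, BM, Matrix.dotProduct_mulVec, ← Matrix.mulVec_transpose, hsymm.eq,
    dotProduct_comm]

lemma Bq_symm {S : Matrix (Fin m) (Fin m) ℤ} (hsymm : S.IsSymm) (x y : Fin m → ℚ) :
    Matrix.toBilin' (S.map (Int.castRingHom ℚ)) x y
      = Matrix.toBilin' (S.map (Int.castRingHom ℚ)) y x := by
  have h : (S.map (Int.castRingHom ℚ)).IsSymm := by
    rw [Matrix.IsSymm, ← Matrix.transpose_map, hsymm.eq]
  rw [Matrix.toBilin'_apply', Matrix.toBilin'_apply', Matrix.dotProduct_mulVec,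
    ← Matrix.mulVec_transpose, h.eq, dotProduct_comm]

lemma clear_denoms (u : Fin m → ℚ) : ∃ d : ℤ, d ≠ 0 ∧ ∃ x : Fin m → ℤ, (d : ℚ) • u = iot x := by
  obtain ⟨b, hb⟩ := IsLocalization.exist_integer_multiples_of_finite
    (nonZeroDivisors ℤ) u
  choose x hx using hb
  refine ⟨(b : ℤ), nonZeroDivisors.coe_ne_zero b, x, ?_⟩
  funext i
  have := hx i
  simp only [algebraMap_int_eq, eq_intCast] at this
  rw [Pi.smul_apply, iot_apply, Int.cast_smul_eq_zsmul ℚ]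
  exact this.symm

lemma clear_denoms_span {M : Submodule ℤ (Fin m → ℤ)} {x : Fin m → ℚ}
    (hx : x ∈ Submodule.span ℚ (iot '' (M : Set (Fin m → ℤ)))) :
    ∃ d : ℤ, d ≠ 0 ∧ ∃ w ∈ M, (d : ℚ) • x = iot w := by
  obtain ⟨n, f, g, hfg⟩ := Submodule.mem_span_set'.mp hx
  have hg : ∀ i, ∃ w ∈ M, iot w = (g i : Fin m → ℚ) := by
    intro i
    obtain ⟨w, hw, hw'⟩ := (g i).2
    exact ⟨w, hw, hw'⟩
  choose w hwM hwiot using hg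
  obtain ⟨b, hb⟩ := IsLocalization.exist_integer_multiples_of_finite (nonZeroDivisors ℤ) f
  choose z hz using hb
  refine ⟨(b : ℤ), nonZeroDivisors.coe_ne_zero b, ∑ i, z i • w i, Submodule.sum_mem _
    (fun i _ => Submodule.smul_mem _ _ (hwM i)), ?_⟩
  rw [← hfg, Finset.smul_sum, map_sum]
  congr 1
  funext i
  have h1 : iot (z i • w i) = ((z i : ℤ) : ℚ) • iot (w i) := by
    rw [LinearMap.map_smul, Int.cast_smul_eq_zsmul ℚ (z i)]
  rw [h1, hwiot, smul_smul]
  congr 1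
  have := hz i
  simp only [algebraMap_int_eq, eq_intCast] at this
  rw [this, zsmul_eq_mul]

end cast

lemma mem_of_ortho (S : Matrix (Fin m) (Fin m) ℤ) (hsymm : S.IsSymm)
    (hnondeg : S.det ≠ 0) (M : Submodule ℤ (Fin m → ℤ))
    (hprim : ∀ (c : ℤ) (x : Fin m → ℤ), c ≠ 0 → c • x ∈ M → x ∈ M)
    (v : Fin m → ℤ) (hv : ∀ w ∈ orthoM S M, BM S v w = 0) : v ∈ M := by
  have hdet : (S.map (Int.castRingHom ℚ)).det ≠ 0 := by
    have hcast : ((S.det : ℤ) : ℚ) = (S.map (Int.castRingHom ℚ)).det :=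
      RingHom.map_det (Int.castRingHom ℚ) S
    rw [← hcast]
    exact_mod_cast hnondeg
  have hnd : (Matrix.toBilin' (S.map (Int.castRingHom ℚ))).Nondegenerate :=
    LinearMap.BilinForm.nondegenerate_toBilin'_of_det_ne_zero' _ hdet
  have hrefl : (Matrix.toBilin' (S.map (Int.castRingHom ℚ))).IsRefl := fun x y hxy => by
    rw [Bq_symm hsymm]; exact hxy
  have hv' : iot v ∈ (Matrix.toBilin' (S.map (Int.castRingHom ℚ))).orthogonal
      ((Matrix.toBilin' (S.map (Int.castRingHom ℚ))).orthogonal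
        (Submodule.span ℚ (iot '' (M : Set (Fin m → ℤ))))) := by
    rw [LinearMap.BilinForm.mem_orthogonal_iff]
    intro u hu
    obtain ⟨d, hd, x, hdx⟩ := clear_denoms u
    have hxN : x ∈ orthoM S M := by
      intro w hw
      have h1 : Matrix.toBilin' (S.map (Int.castRingHom ℚ)) (iot x) (iot w) = 0 := by
        rw [← hdx, _root_.map_smul, LinearMap.smul_apply]
        have h2 : Matrix.toBilin' (S.map (Int.castRingHom ℚ)) u (iot w) = 0 := by
          rw [Bq_symm hsymm]
          exact LinearMap.BilinForm.mem_orthogonal_iff.mp hu (iot w)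
            (Submodule.subset_span ⟨w, hw, rfl⟩)
        rw [h2, smul_zero]
      have := (cast_BM S x w).trans h1
      exact_mod_cast this
    have h3 : (d : ℚ) * Matrix.toBilin' (S.map (Int.castRingHom ℚ)) u (iot v) = 0 := by
      have h4 : Matrix.toBilin' (S.map (Int.castRingHom ℚ)) ((d : ℚ) • u) (iot v)
          = (d : ℚ) * Matrix.toBilin' (S.map (Int.castRingHom ℚ)) u (iot v) := by
        rw [_root_.map_smul, LinearMap.smul_apply, smul_eq_mul]
      rw [← h4, hdx, ← cast_BM S x v]
      rw [BM_symm hsymm]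
      exact_mod_cast congrArg (Int.cast : ℤ → ℚ) (hv x hxN)
    have hdq : (d : ℚ) ≠ 0 := Int.cast_ne_zero.mpr hd
    exact (mul_eq_zero.mp h3).resolve_left hdq
  rw [LinearMap.BilinForm.orthogonal_orthogonal hnd hrefl] at hv'
  obtain ⟨d, hd, w, hwM, hdw⟩ := clear_denoms_span hv'
  have : iot (d • v) = iot w := by
    rw [_root_.map_smul, ← hdw, Int.cast_smul_eq_zsmul ℚ]
  have hdvw : d • v = w := iot_inj this
  exact hprim d v hd (hdvw ▸ hwM)

set_option maxHeartbeats 2000000 in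
/-- Let `L` be an even lattice, `M ⊆ L` a primitive sublattice on which the bilinear form
is non-degenerate, and `N = M^⊥`. Then `ℓ(N^♯) ≤ ℓ(M^♯) + ℓ(L^♯)`. -/
theorem stmt6 {m : ℕ} (S : Matrix (Fin m) (Fin m) ℤ) (hsymm : S.IsSymm)
    (hnondeg : S.det ≠ 0)
    (heven : ∀ v : Fin m → ℤ, Even (BM S v v))
    (M : Submodule ℤ (Fin m → ℤ))
    (hprim : ∀ (c : ℤ) (x : Fin m → ℤ), c ≠ 0 → c • x ∈ M → x ∈ M)
    (hMnondeg : ∀ v ∈ M, (∀ w ∈ M, BM S v w = 0) → v = 0) :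
    glength (discGroup S (orthoM S M)) ≤
      glength (discGroup S M) + glength (discGroup S (⊤ : Submodule ℤ (Fin m → ℤ))) := by
  classical
  set N := orthoM S M with hN
  -- quotient maps
  set RN := LinearMap.range ((bilinMap S).domRestrict₁₂ N N) with hRN
  set RM := LinearMap.range ((bilinMap S).domRestrict₁₂ M M) with hRM
  set RT := LinearMap.range ((bilinMap S).domRestrict₁₂ (⊤ : Submodule ℤ (Fin m → ℤ))
    (⊤ : Submodule ℤ (Fin m → ℤ))) with hRT
  -- φ : L → N^♯ and ψ : L → M^♯
  set φ : (Fin m → ℤ) →ₗ[ℤ] discGroup S N := RN.mkQ.comp ((bilinMap S).domRestrict₂ N) with hφ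
  set ψ : (Fin m → ℤ) →ₗ[ℤ] discGroup S M := RM.mkQ.comp ((bilinMap S).domRestrict₂ M) with hψ
  -- finiteness instances
  haveI : Module.Finite ℤ ↥M := by
    haveI : IsNoetherian ℤ (Fin m → ℤ) := inferInstance
    exact Module.Finite.iff_fg.mpr (IsNoetherian.noetherian M)
  haveI : Module.Finite ℤ ↥N := by
    haveI : IsNoetherian ℤ (Fin m → ℤ) := inferInstance
    exact Module.Finite.iff_fg.mpr (IsNoetherian.noetherian N)
  haveI : Module.Free ℤ ↥M := inferInstance
  haveI : Module.Free ℤ ↥N := inferInstance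
  haveI : Module.Finite ℤ (↥M →ₗ[ℤ] ℤ) := inferInstance
  haveI : Module.Finite ℤ (↥N →ₗ[ℤ] ℤ) := inferInstance
  haveI : Module.Finite ℤ (↥(⊤ : Submodule ℤ (Fin m → ℤ)) →ₗ[ℤ] ℤ) := inferInstance
  haveI hfM : Module.Finite ℤ (discGroup S M) := Module.Finite.quotient ℤ _
  haveI hfN : Module.Finite ℤ (discGroup S N) := Module.Finite.quotient ℤ _
  haveI hfT : Module.Finite ℤ (discGroup S (⊤ : Submodule ℤ (Fin m → ℤ))) :=
    Module.Finite.quotient ℤ _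
  -- kernel equality : ker ψ = ker φ
  have hkerψφ : LinearMap.ker ψ = LinearMap.ker φ := by
    ext x
    simp only [LinearMap.mem_ker, hφ, hψ, LinearMap.comp_apply, Submodule.mkQ_apply,
      Submodule.Quotient.mk_eq_zero]
    constructor
    · intro hxM
      obtain ⟨y, hy⟩ := hxM
      have hyw : ∀ w : ↥M, BM S (y : Fin m → ℤ) (w : Fin m → ℤ) = BM S x (w : Fin m → ℤ) :=
        fun w => LinearMap.congr_fun hy w
      have hsub : x - (y : Fin m → ℤ) ∈ N := by
        intro w hw
        have : BM S (x - (y : Fin m → ℤ)) w = BM S x w - BM S (y : Fin m → ℤ) w := by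
          show bilinMap S (x - (y : Fin m → ℤ)) w = bilinMap S x w - bilinMap S (y:Fin m → ℤ) w
          rw [map_sub, LinearMap.sub_apply]
        rw [this, hyw ⟨w, hw⟩, sub_self]
      refine ⟨⟨x - (y : Fin m → ℤ), hsub⟩, ?_⟩
      apply LinearMap.ext
      intro n
      show BM S (x - (y : Fin m → ℤ)) (n : Fin m → ℤ) = BM S x (n : Fin m → ℤ)
      have hyn : BM S (y : Fin m → ℤ) (n : Fin m → ℤ) = 0 := by
        rw [BM_symm hsymm]
        exact n.2 (y : Fin m → ℤ) y.2
      have : BM S (x - (y : Fin m → ℤ)) (n : Fin m → ℤ)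
          = BM S x (n : Fin m → ℤ) - BM S (y : Fin m → ℤ) (n : Fin m → ℤ) := by
        show bilinMap S _ _ = bilinMap S _ _ - bilinMap S _ _
        rw [map_sub, LinearMap.sub_apply]
      rw [this, hyn, sub_zero]
    · intro hxN
      obtain ⟨n₀, hn₀⟩ := hxN
      have hnw : ∀ n : ↥N, BM S (n₀ : Fin m → ℤ) (n : Fin m → ℤ) = BM S x (n : Fin m → ℤ) :=
        fun n => LinearMap.congr_fun hn₀ n
      have hsub : ∀ w ∈ N, BM S (x - (n₀ : Fin m → ℤ)) w = 0 := by
        intro w hw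
        have : BM S (x - (n₀ : Fin m → ℤ)) w = BM S x w - BM S (n₀ : Fin m → ℤ) w := by
          show bilinMap S _ _ = bilinMap S _ _ - bilinMap S _ _
          rw [map_sub, LinearMap.sub_apply]
        rw [this, hnw ⟨w, hw⟩, sub_self]
      have hvM : x - (n₀ : Fin m → ℤ) ∈ M :=
        mem_of_ortho S hsymm hnondeg M hprim _ hsub
      refine ⟨⟨x - (n₀ : Fin m → ℤ), hvM⟩, ?_⟩
      apply LinearMap.ext
      intro w
      show BM S (x - (n₀ : Fin m → ℤ)) (w : Fin m → ℤ) = BM S x (w : Fin m → ℤ)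
      have hn0w : BM S (n₀ : Fin m → ℤ) (w : Fin m → ℤ) = 0 := n₀.2 (w : Fin m → ℤ) w.2
      have : BM S (x - (n₀ : Fin m → ℤ)) (w : Fin m → ℤ)
          = BM S x (w : Fin m → ℤ) - BM S (n₀ : Fin m → ℤ) (w : Fin m → ℤ) := by
        show bilinMap S _ _ = bilinMap S _ _ - bilinMap S _ _
        rw [map_sub, LinearMap.sub_apply]
      rw [this, hn0w, sub_zero]
  -- the glue subgroup A = range φ
  set A : Submodule ℤ (discGroup S N) := LinearMap.range φ with hA
  haveI : Module.Finite ℤ ↥A := by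
    haveI : IsNoetherian ℤ (discGroup S N) := isNoetherian_of_isNoetherianRing_of_finite ℤ _
    exact Module.Finite.iff_fg.mpr (IsNoetherian.noetherian A)
  haveI : Module.Finite ℤ (discGroup S N ⧸ A) := Module.Finite.quotient ℤ _
  haveI : Module.Finite ℤ ((Fin m → ℤ) ⧸ LinearMap.ker φ) := Module.Finite.quotient ℤ _
  -- Step 1 : ℓ(A) ≤ ℓ(M^♯)
  have step1 : glength ↥A ≤ glength (discGroup S M) := by
    -- A ≃ L/ker φ = L/ker ψ ↪ M^♯
    have e1 : ((Fin m → ℤ) ⧸ LinearMap.ker φ) ≃ₗ[ℤ] ↥A := φ.quotKerEquivRange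
    set ψbar : ((Fin m → ℤ) ⧸ LinearMap.ker φ) →ₗ[ℤ] discGroup S M :=
      Submodule.liftQ (LinearMap.ker φ) ψ (le_of_eq hkerψφ.symm) with hψbar
    have hψbarinj : Function.Injective ψbar := by
      rw [← LinearMap.ker_eq_bot]
      exact Submodule.ker_liftQ_eq_bot _ _ _ (le_of_eq hkerψφ)
    have hinj : Function.Injective (ψbar.comp (e1.symm : ↥A →ₗ[ℤ] _)) :=
      hψbarinj.comp e1.symm.injective
    exact glength_le_of_injective _ hinj
  -- Step 2 : ℓ(N^♯/A) ≤ ℓ(L^♯)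
  have step2 : glength (discGroup S N ⧸ A) ≤
      glength (discGroup S (⊤ : Submodule ℤ (Fin m → ℤ))) := by
    -- restriction of functionals from ⊤ to N, composed with projections
    set res : (↥(⊤ : Submodule ℤ (Fin m → ℤ)) →ₗ[ℤ] ℤ) →ₗ[ℤ] (↥N →ₗ[ℤ] ℤ) :=
      { toFun := fun f => f.comp (Submodule.inclusion (le_top : N ≤ ⊤)),
        map_add' := fun f g => rfl,
        map_smul' := fun c f => rfl } with hres
    set χ : (↥(⊤ : Submodule ℤ (Fin m → ℤ)) →ₗ[ℤ] ℤ) →ₗ[ℤ] (discGroup S N ⧸ A) :=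
      A.mkQ.comp (RN.mkQ.comp res) with hχ
    have hχker : RT ≤ LinearMap.ker χ := by
      rintro - ⟨y, rfl⟩
      rw [LinearMap.mem_ker, hχ, LinearMap.comp_apply, LinearMap.comp_apply]
      have hres_eq : res ((bilinMap S).domRestrict₁₂ ⊤ ⊤ y) = (bilinMap S).domRestrict₂ N (y : Fin m → ℤ) := by
        apply LinearMap.ext
        intro n
        rfl
      rw [hres_eq]
      have heq : RN.mkQ ((bilinMap S).domRestrict₂ N (y : Fin m → ℤ)) = φ (y : Fin m → ℤ) := rfl
      rw [heq, Submodule.mkQ_apply, Submodule.Quotient.mk_eq_zero]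
      exact ⟨(y : Fin m → ℤ), rfl⟩
    have hχsurj : Function.Surjective χ := by
      intro dbar
      obtain ⟨d, rfl⟩ := A.mkQ_surjective dbar
      obtain ⟨gN, rfl⟩ := RN.mkQ_surjective d
      have hsatN : ∀ (c : ℤ) (x : Fin m → ℤ), c ≠ 0 → c • x ∈ N → x ∈ N := by
        intro c x hc hcx w hw
        have := hcx w hw
        have hsmul : BM S (c • x) w = c * BM S x w := by
          show bilinMap S (c • x) w = c * bilinMap S x w
          rw [_root_.map_smul, LinearMap.smul_apply, smul_eq_mul]
        rw [hsmul] at this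
        exact (mul_eq_zero.mp this).resolve_left hc
      obtain ⟨G, hG⟩ := extend_functional N hsatN gN
      refine ⟨G.comp (⊤ : Submodule ℤ (Fin m → ℤ)).subtype, ?_⟩
      rw [hχ, LinearMap.comp_apply, LinearMap.comp_apply]
      congr 1
      congr 1
      apply LinearMap.ext
      intro n
      show G ((n : Fin m → ℤ)) = gN n
      exact hG n
    have hsurj2 : Function.Surjective (Submodule.liftQ RT χ hχker) := by
      intro y
      obtain ⟨x, hx⟩ := hχsurj y
      exact ⟨RT.mkQ x, hx⟩
    exact glength_le_of_surjective (Submodule.liftQ RT χ hχker) hsurj2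
  -- combine
  have main : glength (discGroup S N) ≤ glength ↥A + glength (discGroup S N ⧸ A) :=
    glength_le_add' A.mkQ A.mkQ_surjective A.subtype
      (by rw [Submodule.range_subtype, Submodule.ker_mkQ])
  calc glength (discGroup S N) ≤ glength ↥A + glength (discGroup S N ⧸ A) := main
    _ ≤ glength (discGroup S M) + glength (discGroup S (⊤ : Submodule ℤ (Fin m → ℤ))) :=
        Nat.add_le_add step1 step2
end

section
/- Let g be an isometry of order 2 of the lattice 𝐋 = 3U ⊕ 2E8 ⊕ A2 whose coinvariant sublattice 𝐋_g has rank 1 and is generated by a vector v with v·v = -6. Then v·w ∈ 3ℤ for every w ∈ 𝐋, and the divisibility of v satisfies (v,𝐋) = 3. -/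
open Matrix

/-- Gram matrix of the lattice `𝐋 = 3U ⊕ 2E8 ⊕ A2` (with `E8` negative definite):
three hyperbolic blocks, two copies of the negative definite `E8` Gram matrix,
and the `A2` block `!![-2,1;1,-2]`. -/
def LGram : Matrix (Fin 24) (Fin 24) ℤ :=
  !![0, 1, 0, 0, 0, 0, 0, 0, 0, 0, 0, 0, 0, 0, 0, 0, 0, 0, 0, 0, 0, 0, 0, 0;
    1, 0, 0, 0, 0, 0, 0, 0, 0, 0, 0, 0, 0, 0, 0, 0, 0, 0, 0, 0, 0, 0, 0, 0;
    0, 0, 0, 1, 0, 0, 0, 0, 0, 0, 0, 0, 0, 0, 0, 0, 0, 0, 0, 0, 0, 0, 0, 0;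
    0, 0, 1, 0, 0, 0, 0, 0, 0, 0, 0, 0, 0, 0, 0, 0, 0, 0, 0, 0, 0, 0, 0, 0;
    0, 0, 0, 0, 0, 1, 0, 0, 0, 0, 0, 0, 0, 0, 0, 0, 0, 0, 0, 0, 0, 0, 0, 0;
    0, 0, 0, 0, 1, 0, 0, 0, 0, 0, 0, 0, 0, 0, 0, 0, 0, 0, 0, 0, 0, 0, 0, 0;
    0, 0, 0, 0, 0, 0, -2, 0, 1, 0, 0, 0, 0, 0, 0, 0, 0, 0, 0, 0, 0, 0, 0, 0;
    0, 0, 0, 0, 0, 0, 0, -2, 0, 1, 0, 0, 0, 0, 0, 0, 0, 0, 0, 0, 0, 0, 0, 0;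
    0, 0, 0, 0, 0, 0, 1, 0, -2, 1, 0, 0, 0, 0, 0, 0, 0, 0, 0, 0, 0, 0, 0, 0;
    0, 0, 0, 0, 0, 0, 0, 1, 1, -2, 1, 0, 0, 0, 0, 0, 0, 0, 0, 0, 0, 0, 0, 0;
    0, 0, 0, 0, 0, 0, 0, 0, 0, 1, -2, 1, 0, 0, 0, 0, 0, 0, 0, 0, 0, 0, 0, 0;
    0, 0, 0, 0, 0, 0, 0, 0, 0, 0, 1, -2, 1, 0, 0, 0, 0, 0, 0, 0, 0, 0, 0, 0;
    0, 0, 0, 0, 0, 0, 0, 0, 0, 0, 0, 1, -2, 1, 0, 0, 0, 0, 0, 0, 0, 0, 0, 0;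
    0, 0, 0, 0, 0, 0, 0, 0, 0, 0, 0, 0, 1, -2, 0, 0, 0, 0, 0, 0, 0, 0, 0, 0;
    0, 0, 0, 0, 0, 0, 0, 0, 0, 0, 0, 0, 0, 0, -2, 0, 1, 0, 0, 0, 0, 0, 0, 0;
    0, 0, 0, 0, 0, 0, 0, 0, 0, 0, 0, 0, 0, 0, 0, -2, 0, 1, 0, 0, 0, 0, 0, 0;
    0, 0, 0, 0, 0, 0, 0, 0, 0, 0, 0, 0, 0, 0, 1, 0, -2, 1, 0, 0, 0, 0, 0, 0;
    0, 0, 0, 0, 0, 0, 0, 0, 0, 0, 0, 0, 0, 0, 0, 1, 1, -2, 1, 0, 0, 0, 0, 0;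
    0, 0, 0, 0, 0, 0, 0, 0, 0, 0, 0, 0, 0, 0, 0, 0, 0, 1, -2, 1, 0, 0, 0, 0;
    0, 0, 0, 0, 0, 0, 0, 0, 0, 0, 0, 0, 0, 0, 0, 0, 0, 0, 1, -2, 1, 0, 0, 0;
    0, 0, 0, 0, 0, 0, 0, 0, 0, 0, 0, 0, 0, 0, 0, 0, 0, 0, 0, 1, -2, 1, 0, 0;
    0, 0, 0, 0, 0, 0, 0, 0, 0, 0, 0, 0, 0, 0, 0, 0, 0, 0, 0, 0, 1, -2, 0, 0;
    0, 0, 0, 0, 0, 0, 0, 0, 0, 0, 0, 0, 0, 0, 0, 0, 0, 0, 0, 0, 0, 0, -2, 1;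
    0, 0, 0, 0, 0, 0, 0, 0, 0, 0, 0, 0, 0, 0, 0, 0, 0, 0, 0, 0, 0, 0, 1, -2]

/-- The bilinear form of the lattice `𝐋`. -/
def Bf (v w : Fin 24 → ℤ) : ℤ := v ⬝ᵥ (LGram *ᵥ w)

/-- An isometry of `𝐋` is a `ℤ`-linear automorphism preserving the bilinear form. -/
def IsIsometry (g : (Fin 24 → ℤ) ≃ₗ[ℤ] (Fin 24 → ℤ)) : Prop :=
  ∀ v w, Bf (g v) (g w) = Bf v w

/-- The invariant sublattice `𝐋^g = {v ∈ 𝐋 : g v = v}`. -/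
def invL (g : (Fin 24 → ℤ) ≃ₗ[ℤ] (Fin 24 → ℤ)) : Submodule ℤ (Fin 24 → ℤ) where
  carrier := {v | g v = v}
  add_mem' := by intro a b ha hb; simp only [Set.mem_setOf_eq, map_add] at *; rw [ha, hb]
  zero_mem' := by simp
  smul_mem' := by intro c a ha; simp only [Set.mem_setOf_eq, _root_.map_smul] at *; rw [ha]

/-- The coinvariant sublattice `𝐋_g = {v ∈ 𝐋 : v·w = 0 for all w ∈ 𝐋^g}`. -/
def coinvL (g : (Fin 24 → ℤ) ≃ₗ[ℤ] (Fin 24 → ℤ)) : Submodule ℤ (Fin 24 → ℤ) where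
  carrier := {v | ∀ w ∈ invL g, Bf v w = 0}
  add_mem' := by
    intro a b ha hb w hw
    simp only [Bf, add_dotProduct] at *
    rw [ha w hw, hb w hw, add_zero]
  zero_mem' := by intro w hw; simp [Bf]
  smul_mem' := by
    intro c a ha w hw
    simp only [Bf, smul_dotProduct] at *
    rw [ha w hw, smul_zero]
def G2 : Matrix (Fin 24) (Fin 24) (ZMod 2) := LGram.map Int.cast

def Binv : Matrix (Fin 24) (Fin 24) (ZMod 2) :=
  !![0, 1, 0, 0, 0, 0, 0, 0, 0, 0, 0, 0, 0, 0, 0, 0, 0, 0, 0, 0, 0, 0, 0, 0;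
    1, 0, 0, 0, 0, 0, 0, 0, 0, 0, 0, 0, 0, 0, 0, 0, 0, 0, 0, 0, 0, 0, 0, 0;
    0, 0, 0, 1, 0, 0, 0, 0, 0, 0, 0, 0, 0, 0, 0, 0, 0, 0, 0, 0, 0, 0, 0, 0;
    0, 0, 1, 0, 0, 0, 0, 0, 0, 0, 0, 0, 0, 0, 0, 0, 0, 0, 0, 0, 0, 0, 0, 0;
    0, 0, 0, 0, 0, 1, 0, 0, 0, 0, 0, 0, 0, 0, 0, 0, 0, 0, 0, 0, 0, 0, 0, 0;
    0, 0, 0, 0, 1, 0, 0, 0, 0, 0, 0, 0, 0, 0, 0, 0, 0, 0, 0, 0, 0, 0, 0, 0;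
    0, 0, 0, 0, 0, 0, 0, 1, 1, 0, 0, 0, 0, 0, 0, 0, 0, 0, 0, 0, 0, 0, 0, 0;
    0, 0, 0, 0, 0, 0, 1, 0, 0, 1, 0, 1, 0, 1, 0, 0, 0, 0, 0, 0, 0, 0, 0, 0;
    0, 0, 0, 0, 0, 0, 1, 0, 0, 0, 0, 0, 0, 0, 0, 0, 0, 0, 0, 0, 0, 0, 0, 0;
    0, 0, 0, 0, 0, 0, 0, 1, 0, 0, 0, 0, 0, 0, 0, 0, 0, 0, 0, 0, 0, 0, 0, 0;
    0, 0, 0, 0, 0, 0, 0, 0, 0, 0, 0, 1, 0, 1, 0, 0, 0, 0, 0, 0, 0, 0, 0, 0;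
    0, 0, 0, 0, 0, 0, 0, 1, 0, 0, 1, 0, 0, 0, 0, 0, 0, 0, 0, 0, 0, 0, 0, 0;
    0, 0, 0, 0, 0, 0, 0, 0, 0, 0, 0, 0, 0, 1, 0, 0, 0, 0, 0, 0, 0, 0, 0, 0;
    0, 0, 0, 0, 0, 0, 0, 1, 0, 0, 1, 0, 1, 0, 0, 0, 0, 0, 0, 0, 0, 0, 0, 0;
    0, 0, 0, 0, 0, 0, 0, 0, 0, 0, 0, 0, 0, 0, 0, 1, 1, 0, 0, 0, 0, 0, 0, 0;
    0, 0, 0, 0, 0, 0, 0, 0, 0, 0, 0, 0, 0, 0, 1, 0, 0, 1, 0, 1, 0, 1, 0, 0;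
    0, 0, 0, 0, 0, 0, 0, 0, 0, 0, 0, 0, 0, 0, 1, 0, 0, 0, 0, 0, 0, 0, 0, 0;
    0, 0, 0, 0, 0, 0, 0, 0, 0, 0, 0, 0, 0, 0, 0, 1, 0, 0, 0, 0, 0, 0, 0, 0;
    0, 0, 0, 0, 0, 0, 0, 0, 0, 0, 0, 0, 0, 0, 0, 0, 0, 0, 0, 1, 0, 1, 0, 0;
    0, 0, 0, 0, 0, 0, 0, 0, 0, 0, 0, 0, 0, 0, 0, 1, 0, 0, 1, 0, 0, 0, 0, 0;
    0, 0, 0, 0, 0, 0, 0, 0, 0, 0, 0, 0, 0, 0, 0, 0, 0, 0, 0, 0, 0, 1, 0, 0;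
    0, 0, 0, 0, 0, 0, 0, 0, 0, 0, 0, 0, 0, 0, 0, 1, 0, 0, 1, 0, 1, 0, 0, 0;
    0, 0, 0, 0, 0, 0, 0, 0, 0, 0, 0, 0, 0, 0, 0, 0, 0, 0, 0, 0, 0, 0, 0, 1;
    0, 0, 0, 0, 0, 0, 0, 0, 0, 0, 0, 0, 0, 0, 0, 0, 0, 0, 0, 0, 0, 0, 1, 0]

set_option maxHeartbeats 4000000 in
set_option maxRecDepth 10000 in
lemma BG : Binv * G2 = 1 := by decide

lemma Lsym : ∀ i j, LGram i j = LGram j i := by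
  have h : ∀ i j : Fin 24, Matrix.of.symm LGram i j = Matrix.of.symm LGram j i := by decide
  exact h

/-- If all pairings of `v` with lattice vectors are even, then `v` itself is even. -/
lemma even_of_pairings_even (v : Fin 24 → ℤ) (h : ∀ w, 2 ∣ Bf v w) :
    ∀ j, (2 : ℤ) ∣ v j := by
  have h2i : ∀ i, (2:ℤ) ∣ (LGram *ᵥ v) i := by
    intro i
    have hb := h (Pi.single i 1)
    have e : Bf v (Pi.single i 1) = (LGram *ᵥ v) i := by
      rw [Bf, Matrix.mulVec_single]
      simp only [Matrix.mulVec, dotProduct]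
      exact Finset.sum_congr rfl fun j _ => by simp; rw [Lsym i j, mul_comm]
    rwa [e] at hb
  set x : Fin 24 → ZMod 2 := fun j => ((v j : ℤ) : ZMod 2) with hxdef
  have hx : G2 *ᵥ x = 0 := by
    funext i
    have h0 : (((LGram *ᵥ v) i : ℤ) : ZMod 2) = 0 :=
      (ZMod.intCast_zmod_eq_zero_iff_dvd _ 2).mpr (h2i i)
    have hcast : (G2 *ᵥ x) i = (((LGram *ᵥ v) i : ℤ) : ZMod 2) := by
      simp only [G2, Matrix.mulVec, dotProduct, Matrix.map_apply, hxdef]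
      push_cast
      rfl
    rw [hcast, h0]; rfl
  have hx0 : x = 0 := by
    calc x = (1 : Matrix (Fin 24) (Fin 24) (ZMod 2)) *ᵥ x := by rw [Matrix.one_mulVec]
    _ = (Binv * G2) *ᵥ x := by rw [BG]
    _ = Binv *ᵥ (G2 *ᵥ x) := by rw [Matrix.mulVec_mulVec]
    _ = 0 := by rw [hx, Matrix.mulVec_zero]
  intro j
  exact (ZMod.intCast_zmod_eq_zero_iff_dvd _ 2).mp (congrFun hx0 j)

/-- The divisibility of `v` in `𝐋` is `d`, i.e. `gcd {v·w : w ∈ 𝐋} = d`. -/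
def HasDivisibility (v : Fin 24 → ℤ) (d : ℤ) : Prop :=
  (∀ w, d ∣ Bf v w) ∧ ∀ e : ℤ, (∀ w, e ∣ Bf v w) → e ∣ d

/-- If `g` is an isometry of order `2` of `𝐋 = 3U ⊕ 2E8 ⊕ A2` whose coinvariant sublattice
has rank `1` and is generated by a vector `v` with `v·v = -6`, then `v·w ∈ 3ℤ` for every
`w ∈ 𝐋`, and the divisibility of `v` is `(v,𝐋) = 3`. -/
theorem stmt7 (g : (Fin 24 → ℤ) ≃ₗ[ℤ] (Fin 24 → ℤ)) (hiso : IsIsometry g)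
    (hord : orderOf g = 2) (v : Fin 24 → ℤ)
    (hrank : Module.finrank ℤ (coinvL g) = 1)
    (hgen : coinvL g = Submodule.span ℤ {v})
    (hv6 : Bf v v = -6) :
    (∀ w : Fin 24 → ℤ, (3 : ℤ) ∣ Bf v w) ∧ HasDivisibility v 3 := by
  -- g has order 2
  have hsq : g * g = 1 := by
    have := pow_orderOf_eq_one g
    rwa [hord, pow_two] at this
  have hgg : ∀ x, g (g x) = x := fun x => by simpa using DFunLike.congr_fun hsq x
  -- v ∈ coinvariant lattice
  have hvmem : v ∈ coinvL g := by
    rw [hgen]; exact Submodule.mem_span_singleton_self v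
  have hvperp : ∀ w ∈ invL g, Bf v w = 0 := hvmem
  -- v ≠ 0
  have hvne : v ≠ 0 := by
    intro h; rw [h] at hv6; simp [Bf] at hv6
  -- g v = -v
  have hgv : g v = -v := by
    have hmem : g v ∈ coinvL g := by
      intro w hw
      have hw' : g w = w := hw
      calc Bf (g v) w = Bf (g v) (g w) := by rw [hw']
      _ = Bf v w := hiso v w
      _ = 0 := hvperp w hw
    rw [hgen, Submodule.mem_span_singleton] at hmem
    obtain ⟨c, hc⟩ := hmem
    have hvc : (c * c) • v = v := by
      have := hgg v
      rw [← hc, _root_.map_smul, ← hc, smul_smul] at this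
      exact this
    obtain ⟨i, hi⟩ := Function.ne_iff.mp hvne
    have hcc : c * c = 1 := by
      have h' := congrFun hvc i
      simp only [Pi.smul_apply, smul_eq_mul] at h'
      have : (c * c - 1) * v i = 0 := by ring_nf; linarith
      rcases mul_eq_zero.mp this with h | h
      · linarith
      · exact absurd h hi
    rcases mul_self_eq_one_iff.mp hcc with h1 | h1
    · exfalso
      rw [h1, one_smul] at hc
      have : v ∈ invL g := hc.symm
      have := hvperp v this
      rw [hv6] at this; norm_num at this
    · rw [h1, neg_one_smul] at hc
      exact hc.symm
  -- pairing with g w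
  have hpair : ∀ w, Bf v (g w) = -Bf v w := by
    intro w
    have h1 : Bf (g v) (g w) = Bf v w := hiso v w
    rw [hgv] at h1
    have : Bf (-v) (g w) = -Bf v (g w) := by
      simp [Bf, neg_dotProduct]
    rw [this] at h1
    linarith
  -- Part 1: 3 ∣ Bf v w for all w
  have part1 : ∀ w : Fin 24 → ℤ, (3:ℤ) ∣ Bf v w := by
    intro w
    have hmem : w - g w ∈ coinvL g := by
      intro t ht
      have ht' : g t = t := ht
      have e1 : Bf (w - g w) t = Bf w t - Bf (g w) t := by
        simp [Bf, sub_dotProduct]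
      have e2 : Bf (g w) t = Bf w t := by
        calc Bf (g w) t = Bf (g w) (g t) := by rw [ht']
        _ = Bf w t := hiso w t
      rw [e1, e2, sub_self]
    rw [hgen, Submodule.mem_span_singleton] at hmem
    obtain ⟨c, hc⟩ := hmem
    have e3 : Bf v (w - g w) = 2 * Bf v w := by
      have : Bf v (w - g w) = Bf v w - Bf v (g w) := by
        simp [Bf, Matrix.mulVec_sub, dotProduct_sub]
      rw [this, hpair]; ring
    have e4 : Bf v (c • v) = c * Bf v v := by
      simp only [Bf]
      rw [Matrix.mulVec_smul, dotProduct_smul, smul_eq_mul]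
    rw [hc, e3, hv6] at e4
    exact ⟨-c, by linarith⟩
  refine ⟨part1, part1, ?_⟩
  -- Part 2: divisibility is exactly 3
  intro e he
  have he6 : e ∣ 6 := by
    have := he v
    rw [hv6] at this
    exact dvd_neg.mp this
  -- there is a w₀ with Bf v w₀ odd
  have hodd : ∃ w, ¬ (2:ℤ) ∣ Bf v w := by
    by_contra hall
    push_neg at hall
    have hall' : ∀ w, (2:ℤ) ∣ Bf v w := fun w => by
      obtain ⟨k, hk⟩ := hall w; exact ⟨k, hk⟩
    have hv2 := even_of_pairings_even v hall'
    -- v = 2 • u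
    set u : Fin 24 → ℤ := fun j => v j / 2 with hu
    have hvu : v = (2:ℤ) • u := by
      funext j
      obtain ⟨k, hk⟩ := hv2 j
      simp only [Pi.smul_apply, smul_eq_mul, hu, hk]
      omega
    have h4 : Bf v v = 4 * Bf u u := by
      rw [hvu]
      simp only [Bf]
      rw [Matrix.mulVec_smul, dotProduct_smul, smul_dotProduct, smul_eq_mul, smul_eq_mul]
      ring
    rw [hv6] at h4
    omega
  obtain ⟨w₀, hw₀⟩ := hodd
  have heo : e ∣ Bf v w₀ := he w₀
  have heodd : ¬ (2:ℤ) ∣ e := fun h => hw₀ (h.trans heo)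
  -- e ∣ 6 and e odd implies e ∣ 3
  have h1 : e.natAbs ∣ 6 := Int.natAbs_dvd_natAbs.mpr he6
  have h2 : ¬ (2 ∣ e.natAbs) := by
    intro h
    exact heodd (Int.natAbs_dvd_natAbs.mp (by exact_mod_cast h : (2:ℤ).natAbs ∣ e.natAbs))
  have h3 : e.natAbs ∣ 3 := by
    have hle : e.natAbs ≤ 6 := Nat.le_of_dvd (by norm_num) h1
    interval_cases h : e.natAbs <;> simp_all <;> omega
  exact Int.natAbs_dvd.mp (by exact_mod_cast h3)
end
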